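/- Let G be a graph with a partial order ≻ on V(G) such that distinct vertices are adjacent iff ≻-incomparable, and let k ≥ 1. Define x ⊐ y iff x ≻ y and the distance from x to y in G exceeds k. Then ⊐ is a strict partial order (in particular, it is transitive). -/

import Mathlib

variable {V : Type*}

theorem stmt7 (G : SimpleGraph V) (r : V → V → Prop) (hr : IsStrictOrder V r)
    (hadj : ∀ x y, G.Adj x y ↔ (x ≠ y ∧ ¬ r x y ∧ ¬ r y x))
    (k : ℕ) (hk : 1 ≤ k) :
    IsStrictOrder V (fun x y => r x y ∧ ¬ (G.Reachable x y ∧ G.dist x y ≤ k)) := by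
  classical
  have hirr : ∀ a, ¬ r a a := fun a => hr.toIrrefl.irrefl a
  have htr : ∀ a b c, r a b → r b c → r a c := fun a b c => hr.toIsTrans.trans a b c
  have h1 : IsIrrefl V (fun x y => r x y ∧ ¬ (G.Reachable x y ∧ G.dist x y ≤ k)) :=
    ⟨fun a ha => hirr a ha.1⟩
  have h2 : IsTrans V (fun x y => r x y ∧ ¬ (G.Reachable x y ∧ G.dist x y ≤ k)) := by
    refine ⟨fun a b c hab hbc => ?_⟩
    refine ⟨htr a b c hab.1 hbc.1, fun ⟨hreach, hdist⟩ => ?_⟩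
    obtain ⟨p, hp⟩ := hreach.exists_walk_length_eq_dist
    have hplen : p.length ≤ k := hp ▸ hdist
    -- find the transition index
    have h0 : r (p.getVert 0) b := by simpa using hab.1
    have hE : ∃ n, ¬ r (p.getVert n) b := by
      refine ⟨p.length, fun h => ?_⟩
      rw [p.getVert_length] at h
      exact hirr c (htr c b c h hbc.1)
    set m := Nat.find hE with hm
    have hmnr : ¬ r (p.getVert m) b := Nat.find_spec hE
    have hm0 : m ≠ 0 := fun h => hmnr (h ▸ h0)
    have hmle : m ≤ p.length := Nat.find_le (by
      intro h; rw [p.getVert_length] at h; exact hirr c (htr c b c h hbc.1))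
    have hprev : r (p.getVert (m - 1)) b := by
      by_contra h
      have := Nat.find_min' hE h
      omega
    have hadj' : G.Adj (p.getVert (m - 1)) (p.getVert m) := by
      have h' := p.adj_getVert_succ (i := m - 1) (by omega)
      have e : m - 1 + 1 = m := by omega
      rwa [e] at h'
    have hnvw : ¬ r (p.getVert (m - 1)) (p.getVert m) := ((hadj _ _).mp hadj').2.1
    set w := p.getVert m with hwdef
    have hwb : w ≠ b := by
      intro h
      exact ((hadj _ _).mp (h ▸ hadj')).2.1 hprev
    have hnbw : ¬ r b w := fun h => hnvw (htr _ _ _ hprev h)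
    have hadjwb : G.Adj w b := (hadj w b).mpr ⟨hwb, hmnr, hnbw⟩
    -- split the walk at w
    have hws : w ∈ p.support := by
      rw [SimpleGraph.Walk.mem_support_iff_exists_getVert]
      exact ⟨m, rfl, hmle⟩
    set q := p.dropUntil w hws with hq
    have hlen : (p.takeUntil w hws).length + q.length = p.length := by
      rw [hq, ← SimpleGraph.Walk.length_append, p.take_spec hws]
    have htpos : 1 ≤ (p.takeUntil w hws).length := by
      rcases Nat.eq_zero_or_pos (p.takeUntil w hws).length with h | h
      · have : a = w := SimpleGraph.Walk.eq_of_length_eq_zero h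
        exact absurd (this ▸ hab.1) hmnr
      · exact h
    have hdbc : G.dist b c ≤ q.length + 1 := by
      have := G.dist_le (SimpleGraph.Walk.cons hadjwb.symm q)
      simpa using this
    exact hbc.2 ⟨⟨SimpleGraph.Walk.cons hadjwb.symm q⟩, by omega⟩
  exact { toIrrefl := h1, toIsTrans := h2 }
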